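/- arXiv:2407.16075 — 2 statements merged into one kernel-verified Lean document; each statement's English description precedes it below -/
import Mathlib

section
/- Let $x \in [0, \pi]$ and let $n_0 < n_1 < \dots < n_K$ be positive integers. Then $\sum_{j=1}^{K} \left| \int_{n_{j-1}x}^{n_j x} \frac{\sin t}{t}\,dt \right| \leq C(1 + \log K)$ for an absolute constant $C > 0$. -/
open Real MeasureTheory


lemma sinc_integrable {a b : ℝ} (ha : 0 < a) (hb : 0 < b) :
    IntervalIntegrable (fun t => Real.sin t / t) volume a b := by
  apply ContinuousOn.intervalIntegrable
  apply Real.continuousOn_sin.div continuousOn_id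
  intro t ht
  rw [Set.uIcc_eq_union] at ht
  have : 0 < t := by
    rcases ht with h | h
    · exact lt_of_lt_of_le ha h.1
    · exact lt_of_lt_of_le hb h.1
  exact ne_of_gt this

-- F12
lemma sinc_int_le {a b : ℝ} (ha : 0 < a) (hab : a ≤ b) :
    |∫ t in a..b, Real.sin t / t| ≤ (b - a) / max a 1 := by
  have h : ∀ t ∈ Set.uIoc a b, ‖Real.sin t / t‖ ≤ 1 / max a 1 := by
    intro t ht
    rw [Set.uIoc_of_le hab] at ht
    have ht1 : a < t := ht.1
    have ht0 : 0 < t := lt_trans ha ht1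
    rw [Real.norm_eq_abs, abs_div, abs_of_pos ht0, div_le_div_iff₀ ht0 (by positivity), one_mul]
    rcases le_total t 1 with h1 | h1
    · calc |Real.sin t| * max a 1 ≤ |t| * 1 :=
            mul_le_mul (Real.abs_sin_le_abs) (max_le (ht1.le.trans h1) le_rfl) (by positivity) (abs_nonneg _)
          _ = t := by rw [mul_one, abs_of_pos ht0]
    · calc |Real.sin t| * max a 1 ≤ 1 * t :=
            mul_le_mul (Real.abs_sin_le_one t) (max_le ht1.le h1) (by positivity) zero_le_one
          _ = t := one_mul t
  have := intervalIntegral.norm_integral_le_of_norm_le_const h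
  rw [Real.norm_eq_abs] at this
  calc |∫ t in a..b, Real.sin t / t| ≤ 1 / max a 1 * |b - a| := this
    _ = (b - a) / max a 1 := by rw [abs_of_nonneg (by linarith)]; ring


lemma sinc_int_le_two_div {a b : ℝ} (ha : 1 ≤ a) (hab : a ≤ b) :
    |∫ t in a..b, Real.sin t / t| ≤ 2 / a := by
  have ha0 : 0 < a := lt_of_lt_of_le one_pos ha
  have hb0 : 0 < b := lt_of_lt_of_le ha0 hab
  have hpos : ∀ t ∈ Set.uIcc a b, 0 < t := by
    intro t ht
    rw [Set.uIcc_of_le hab] at ht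
    exact lt_of_lt_of_le ha0 ht.1
  have hu : ∀ t ∈ Set.uIcc a b, HasDerivAt (fun y : ℝ => y⁻¹) (-((t:ℝ)^2)⁻¹) t :=
    fun t ht => hasDerivAt_inv (ne_of_gt (hpos t ht))
  have hv : ∀ t ∈ Set.uIcc a b, HasDerivAt (fun y : ℝ => -Real.cos y) (Real.sin t) t := by
    intro t _
    have := (Real.hasDerivAt_cos t).neg; rw [neg_neg] at this; exact this
  have hu' : IntervalIntegrable (fun t : ℝ => -((t:ℝ)^2)⁻¹) volume a b := by
    apply ContinuousOn.intervalIntegrable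
    exact (continuousOn_id.pow 2).inv₀ (fun t ht => pow_ne_zero 2 (ne_of_gt (hpos t ht))) |>.neg
  have hv' : IntervalIntegrable Real.sin volume a b := Real.continuous_sin.intervalIntegrable a b
  have ibp := intervalIntegral.integral_mul_deriv_eq_deriv_mul hu hv hu' hv'
  have heq : (∫ t in a..b, Real.sin t / t) = ∫ t in a..b, t⁻¹ * Real.sin t := by
    congr 1; ext t; rw [div_eq_inv_mul]
  rw [heq, ibp]
  have hI : |∫ t in a..b, -((t:ℝ)^2)⁻¹ * -Real.cos t| ≤ a⁻¹ - b⁻¹ := by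
    have h1 : ‖∫ t in a..b, -((t:ℝ)^2)⁻¹ * -Real.cos t‖ ≤ ∫ t in a..b, ‖-((t:ℝ)^2)⁻¹ * -Real.cos t‖ :=
      intervalIntegral.norm_integral_le_integral_norm hab
    have h2 : (∫ t in a..b, ‖-((t:ℝ)^2)⁻¹ * -Real.cos t‖) ≤ ∫ t in a..b, (t:ℝ) ^ (-2 : ℤ) := by
      apply intervalIntegral.integral_mono_on hab
      · apply ContinuousOn.intervalIntegrable
        apply ContinuousOn.norm
        exact (((continuousOn_id.pow 2).inv₀ (fun t ht => pow_ne_zero 2 (ne_of_gt (hpos t ht)))).neg).mul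
          (Real.continuous_cos.continuousOn.neg)
      · apply ContinuousOn.intervalIntegrable
        apply ContinuousOn.zpow₀ continuousOn_id
        intro t ht
        exact Or.inl (ne_of_gt (hpos t ht))
      · intro t ht
        have ht0 : 0 < t := hpos t (by rw [Set.uIcc_of_le hab]; exact ht)
        rw [norm_mul, norm_neg, norm_neg, Real.norm_eq_abs, Real.norm_eq_abs]
        rw [abs_of_pos (by positivity : (0:ℝ) < ((t:ℝ)^2)⁻¹)]
        calc ((t:ℝ)^2)⁻¹ * |Real.cos t| ≤ ((t:ℝ)^2)⁻¹ * 1 :=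
              mul_le_mul_of_nonneg_left (Real.abs_cos_le_one t) (by positivity)
          _ = (t:ℝ) ^ (-2 : ℤ) := by rw [mul_one, zpow_neg, zpow_two]; ring_nf
    have h3 : (∫ t in a..b, (t:ℝ) ^ (-2 : ℤ)) = a⁻¹ - b⁻¹ := by
      rw [integral_zpow]
      · norm_num
        ring
      · right
        constructor
        · norm_num
        · rw [Set.uIcc_of_le hab]
          intro h
          exact absurd h.1 (not_le.mpr ha0)
    rw [Real.norm_eq_abs] at h1
    linarith
  have hba : b⁻¹ ≤ a⁻¹ := inv_anti₀ ha0 hab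
  have hb1 : b⁻¹ ≤ 1 := by
    rw [inv_le_one_iff₀]; right; linarith
  have ha1 : a⁻¹ ≤ 1 := by
    rw [inv_le_one_iff₀]; right; linarith
  have hcb : |(-Real.cos b)| ≤ 1 := by rw [abs_neg]; exact Real.abs_cos_le_one b
  have hca : |(-Real.cos a)| ≤ 1 := by rw [abs_neg]; exact Real.abs_cos_le_one a
  have e1 : |b⁻¹ * -Real.cos b| ≤ b⁻¹ := by
    rw [abs_mul, abs_of_pos (by positivity : (0:ℝ) < b⁻¹)]
    calc b⁻¹ * |(-Real.cos b)| ≤ b⁻¹ * 1 := mul_le_mul_of_nonneg_left hcb (by positivity)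
      _ = b⁻¹ := mul_one _
  have e2 : |a⁻¹ * -Real.cos a| ≤ a⁻¹ := by
    rw [abs_mul, abs_of_pos (by positivity : (0:ℝ) < a⁻¹)]
    calc a⁻¹ * |(-Real.cos a)| ≤ a⁻¹ * 1 := mul_le_mul_of_nonneg_left hca (by positivity)
      _ = a⁻¹ := mul_one _
  have final : |b⁻¹ * -Real.cos b - a⁻¹ * -Real.cos a - ∫ t in a..b, -((t:ℝ)^2)⁻¹ * -Real.cos t|
      ≤ b⁻¹ + a⁻¹ + (a⁻¹ - b⁻¹) := by
    calc _ ≤ |b⁻¹ * -Real.cos b - a⁻¹ * -Real.cos a| + |∫ t in a..b, -((t:ℝ)^2)⁻¹ * -Real.cos t| :=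
          abs_sub _ _
      _ ≤ (|b⁻¹ * -Real.cos b| + |a⁻¹ * -Real.cos a|) + (a⁻¹ - b⁻¹) := by
          apply add_le_add (abs_sub _ _) hI
      _ ≤ b⁻¹ + a⁻¹ + (a⁻¹ - b⁻¹) := by linarith
  calc _ ≤ b⁻¹ + a⁻¹ + (a⁻¹ - b⁻¹) := final
    _ = 2 / a := by rw [div_eq_mul_inv]; ring



lemma lemP {a b : ℝ} (ha : 0 < a) (hab : a ≤ b) :
    |∫ t in a..b, Real.sin t / t| ≤ 3 * min (b - a) 1 / max a 1 := by
  have hmax : (0:ℝ) < max a 1 := lt_of_lt_of_le one_pos (le_max_right a 1)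
  rcases le_or_gt (b - a) 1 with h | h
  · rw [min_eq_left h]
    calc |∫ t in a..b, Real.sin t / t| ≤ (b - a) / max a 1 := sinc_int_le ha hab
      _ ≤ 3 * (b - a) / max a 1 := by
          apply div_le_div_of_nonneg_right ?_ hmax.le
          linarith
  · rw [min_eq_right h.le]
    rcases le_or_gt 1 a with h1 | h1
    · rw [max_eq_left h1]
      calc |∫ t in a..b, Real.sin t / t| ≤ 2 / a := sinc_int_le_two_div h1 hab
        _ ≤ 3 * 1 / a := by
            apply div_le_div_of_nonneg_right (by norm_num) ha.le
    · rw [max_eq_right h1.le]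
      have hb1 : (1:ℝ) ≤ b := by linarith
      have hsplit : (∫ t in a..b, Real.sin t / t)
          = (∫ t in a..1, Real.sin t / t) + ∫ t in (1:ℝ)..b, Real.sin t / t :=
        (intervalIntegral.integral_add_adjacent_intervals
          (sinc_integrable ha one_pos) (sinc_integrable one_pos (by linarith))).symm
      rw [hsplit]
      have e1 : |∫ t in a..1, Real.sin t / t| ≤ 1 := by
        have := sinc_int_le ha h1.le
        rw [max_eq_right h1.le] at this
        calc |∫ t in a..1, Real.sin t / t| ≤ (1 - a) / 1 := this
          _ ≤ 1 := by linarith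
      have e2 : |∫ t in (1:ℝ)..b, Real.sin t / t| ≤ 2 := by
        have := sinc_int_le_two_div (le_refl 1) hb1
        simpa using this
      calc |(∫ t in a..1, Real.sin t / t) + ∫ t in (1:ℝ)..b, Real.sin t / t|
          ≤ |∫ t in a..1, Real.sin t / t| + |∫ t in (1:ℝ)..b, Real.sin t / t| := abs_add_le _ _
        _ ≤ 3 * 1 / 1 := by norm_num; linarith


lemma claimC (a : ℕ → ℝ) (ha0 : ∀ j, 0 ≤ a j) (hmono : Monotone a) (K : ℕ) (B : ℝ) (hB : 1 ≤ B)
    (S : Finset ℕ) (hS : S ⊆ Finset.range K) (hSa : ∀ j ∈ S, a j < B) :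
    ∑ j ∈ S, min (a (j+1) - a j) 1 ≤ 2 * B := by
  rcases S.eq_empty_or_nonempty with rfl | hne
  · simp; linarith
  set g : ℕ → ℝ := fun j => min (a j) B with hg
  have hgmono : Monotone g := fun i j hij => min_le_min (hmono hij) le_rfl
  set j0 := S.max' hne with hj0def
  have hj0 : j0 ∈ S := S.max'_mem hne
  have key : ∀ j ∈ S.erase j0, min (a (j+1) - a j) 1 ≤ g (j+1) - g j := by
    intro j hj
    have hjS : j ∈ S := Finset.mem_of_mem_erase hj
    have hjlt : j < j0 := lt_of_le_of_ne (S.le_max' j hjS) (Finset.ne_of_mem_erase hj)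
    have hj1 : a (j+1) ≤ a j0 := hmono (Nat.succ_le_of_lt hjlt)
    have hB1 : a (j+1) < B := lt_of_le_of_lt hj1 (hSa j0 hj0)
    have e1 : g (j+1) = a (j+1) := min_eq_left hB1.le
    have e2 : g j = a j := min_eq_left ((hSa j hjS).le)
    rw [e1, e2]
    exact min_le_left _ _
  have h1 : ∑ j ∈ S.erase j0, min (a (j+1) - a j) 1 ≤ ∑ j ∈ S.erase j0, (g (j+1) - g j) :=
    Finset.sum_le_sum key
  have h2 : ∑ j ∈ S.erase j0, (g (j+1) - g j) ≤ ∑ j ∈ Finset.range K, (g (j+1) - g j) :=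
    Finset.sum_le_sum_of_subset_of_nonneg ((S.erase_subset j0).trans hS)
      (fun j _ _ => sub_nonneg.mpr (hgmono (Nat.le_succ j)))
  have h3 : ∑ j ∈ Finset.range K, (g (j+1) - g j) = g K - g 0 := Finset.sum_range_sub g K
  have h4 : g K ≤ B := min_le_right _ _
  have h5 : (0:ℝ) ≤ g 0 := le_min (ha0 0) (by linarith)
  have h6 : min (a (j0+1) - a j0) 1 ≤ B := le_trans (min_le_right _ _) hB
  calc ∑ j ∈ S, min (a (j+1) - a j) 1
      = (∑ j ∈ S.erase j0, min (a (j+1) - a j) 1) + min (a (j0+1) - a j0) 1 :=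
        (Finset.sum_erase_add S _ hj0).symm
    _ ≤ (g K - g 0) + B := by
        have := h1.trans (h2.trans_eq h3)
        linarith
    _ ≤ 2 * B := by linarith



lemma lemO (a : ℕ → ℝ) (ha0 : ∀ j, 0 ≤ a j) (hmono : Monotone a) (K : ℕ) (hK : 1 ≤ K) :
    ∑ j ∈ Finset.range K, min (a (j+1) - a j) 1 / max (a j) 1 ≤ 8 * (1 + Real.log K) := by
  classical
  set f : ℕ → ℝ := fun j => min (a (j+1) - a j) 1 / max (a j) 1 with hf
  set kf : ℕ → ℕ := fun j => Nat.log 2 ⌊a j⌋₊ with hkf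
  have hmaxpos : ∀ j, (0:ℝ) < max (a j) 1 := fun j => lt_of_lt_of_le one_pos (le_max_right _ _)
  have hminnn : ∀ j, (0:ℝ) ≤ min (a (j+1) - a j) 1 :=
    fun j => le_min (sub_nonneg.mpr (hmono (Nat.le_succ j))) one_pos.le
  have hfnn : ∀ j, 0 ≤ f j := fun j => div_nonneg (hminnn j) (hmaxpos j).le
  have hk1 : ∀ j, (2:ℝ)^(kf j) ≤ max (a j) 1 := by
    intro j
    rcases lt_or_ge (a j) 1 with h | h
    · have : ⌊a j⌋₊ = 0 := Nat.floor_eq_zero.mpr h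
      simp [hkf, this]
    · have hne : ⌊a j⌋₊ ≠ 0 := by
        have : 1 ≤ ⌊a j⌋₊ := Nat.one_le_floor_iff _ |>.mpr h
        omega
      have h1 : (2:ℕ)^(kf j) ≤ ⌊a j⌋₊ := Nat.pow_log_le_self 2 hne
      have h2 : ((2:ℝ))^(kf j) ≤ (⌊a j⌋₊ : ℝ) := by exact_mod_cast h1
      have h3 : (⌊a j⌋₊ : ℝ) ≤ a j := Nat.floor_le (ha0 j)
      exact h2.trans (h3.trans (le_max_left _ _))
  have hk2 : ∀ j, a j < (2:ℝ)^(kf j + 1) := by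
    intro j
    have h1 : a j < ⌊a j⌋₊ + 1 := Nat.lt_floor_add_one _
    have h2 : ⌊a j⌋₊ < 2^(kf j + 1) := Nat.lt_pow_succ_log_self one_lt_two _
    have h3 : (⌊a j⌋₊ : ℝ) + 1 ≤ ((2:ℕ)^(kf j + 1) : ℝ) := by
      exact_mod_cast Nat.succ_le_of_lt h2
    push_cast at h3
    linarith
  set T := (Finset.range K).image kf with hT
  have hfib : ∑ k ∈ T, ∑ j ∈ (Finset.range K).filter (fun j => kf j = k), f j
      = ∑ j ∈ Finset.range K, f j :=
    Finset.sum_fiberwise_of_maps_to (fun j hj => Finset.mem_image_of_mem kf hj) f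
  have hbucket : ∀ k : ℕ, ∑ j ∈ (Finset.range K).filter (fun j => kf j = k), f j
      ≤ min 4 ((K:ℝ) * (1/2)^k) := by
    intro k
    set Sk := (Finset.range K).filter (fun j => kf j = k) with hSk
    have hmem : ∀ j ∈ Sk, kf j = k := fun j hj => (Finset.mem_filter.mp hj).2
    have hpk : (0:ℝ) < 2^k := by positivity
    apply le_min
    · -- ≤ 4 via claimC
      have step : ∀ j ∈ Sk, f j ≤ min (a (j+1) - a j) 1 / 2^k := by
        intro j hj
        apply div_le_div_of_nonneg_left (hminnn j) hpk
        rw [← hmem j hj] at *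
        exact hk1 j
      calc ∑ j ∈ Sk, f j ≤ ∑ j ∈ Sk, min (a (j+1) - a j) 1 / 2^k := Finset.sum_le_sum step
        _ = (∑ j ∈ Sk, min (a (j+1) - a j) 1) / 2^k := by rw [Finset.sum_div]
        _ ≤ (2 * 2^(k+1)) / 2^k := by
            apply div_le_div_of_nonneg_right ?_ hpk.le
            · apply claimC a ha0 hmono K ((2:ℝ)^(k+1))
                (one_le_pow₀ (by norm_num : (1:ℝ) ≤ 2))
                Sk (Finset.filter_subset _ _)
              intro j hj
              rw [← hmem j hj]
              exact hk2 j
        _ = 4 := by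
            rw [pow_succ]
            field_simp
            ring
    · -- ≤ K * (1/2)^k
      have step : ∀ j ∈ Sk, f j ≤ (1/2:ℝ)^k := by
        intro j hj
        have h1 : f j ≤ 1 / max (a j) 1 :=
          div_le_div_of_nonneg_right (min_le_right _ _) (hmaxpos j).le
        have h2 : (1:ℝ) / max (a j) 1 ≤ 1 / 2^k := by
          apply one_div_le_one_div_of_le hpk
          rw [← hmem j hj] at *
          exact hk1 j
        calc f j ≤ 1 / 2^k := h1.trans h2
          _ = (1/2:ℝ)^k := by rw [one_div, ← inv_pow, one_div]
      calc ∑ j ∈ Sk, f j ≤ Sk.card • ((1/2:ℝ)^k) := Finset.sum_le_card_nsmul Sk f _ step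
        _ = (Sk.card : ℝ) * (1/2)^k := nsmul_eq_mul _ _
        _ ≤ (K:ℝ) * (1/2)^k := by
            apply mul_le_mul_of_nonneg_right ?_ (by positivity)
            exact_mod_cast (Finset.card_filter_le _ _).trans (le_of_eq (Finset.card_range K))
  set L := Nat.log 2 K with hLdef
  have hsum1 : ∑ j ∈ Finset.range K, f j ≤ ∑ k ∈ T, min 4 ((K:ℝ) * (1/2)^k) := by
    rw [← hfib]
    exact Finset.sum_le_sum (fun k _ => hbucket k)
  set T1 := T.filter (fun k => k ≤ L) with hT1
  set T2 := T.filter (fun k => ¬ k ≤ L) with hT2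
  have hsplit : ∑ k ∈ T, min 4 ((K:ℝ) * (1/2)^k)
      = (∑ k ∈ T1, min 4 ((K:ℝ) * (1/2)^k)) + ∑ k ∈ T2, min 4 ((K:ℝ) * (1/2)^k) :=
    (Finset.sum_filter_add_sum_filter_not T _ _).symm
  have hB1 : ∑ k ∈ T1, min 4 ((K:ℝ) * (1/2)^k) ≤ 4 * (L + 1) := by
    have hsub : T1 ⊆ Finset.range (L + 1) := by
      intro k hk
      rw [Finset.mem_range, Nat.lt_succ_iff]
      exact (Finset.mem_filter.mp hk).2
    calc ∑ k ∈ T1, min 4 ((K:ℝ) * (1/2)^k) ≤ ∑ _k ∈ T1, (4:ℝ) :=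
          Finset.sum_le_sum (fun k _ => min_le_left _ _)
      _ = (T1.card : ℝ) * 4 := by rw [Finset.sum_const, nsmul_eq_mul]
      _ ≤ ((L:ℝ) + 1) * 4 := by
          apply mul_le_mul_of_nonneg_right ?_ (by norm_num)
          have := Finset.card_le_card hsub
          rw [Finset.card_range] at this
          exact_mod_cast this
      _ = 4 * (L + 1) := by ring
  have hB2 : ∑ k ∈ T2, min 4 ((K:ℝ) * (1/2)^k) ≤ 2 := by
    have hhalf : Summable (fun i : ℕ => (1/2:ℝ)^i) :=
      summable_geometric_of_lt_one (by norm_num) (by norm_num)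
    have hsub : ∀ k ∈ T2, L + 1 ≤ k := by
      intro k hk
      have := (Finset.mem_filter.mp hk).2
      omega
    have hgeo : ∑ k ∈ T2, (1/2:ℝ)^k ≤ (1/2)^L := by
      calc ∑ k ∈ T2, (1/2:ℝ)^k = ∑ k ∈ T2, (1/2:ℝ)^(L+1) * (1/2)^(k - (L+1)) := by
            apply Finset.sum_congr rfl
            intro k hk
            have hk' := hsub k hk
            rw [← pow_add, show L + 1 + (k - (L+1)) = k from by omega]
        _ = (1/2:ℝ)^(L+1) * ∑ k ∈ T2, (1/2:ℝ)^(k - (L+1)) := by rw [Finset.mul_sum]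
        _ ≤ (1/2:ℝ)^(L+1) * 2 := by
            apply mul_le_mul_of_nonneg_left ?_ (by positivity)
            have hinj : Set.InjOn (fun k => k - (L+1)) T2 := by
              intro p hp q hq hpq
              have h1 := hsub p hp
              have h2 := hsub q hq
              simp only [] at hpq
              omega
            calc ∑ k ∈ T2, (1/2:ℝ)^(k - (L+1))
                = ∑ i ∈ T2.image (fun k => k - (L+1)), (1/2:ℝ)^i :=
                  (Finset.sum_image (fun p hp q hq h => hinj hp hq h)).symm
              _ ≤ ∑' (i : ℕ), (1/2:ℝ)^i :=
                  Summable.sum_le_tsum _ (fun i _ => by positivity) hhalf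
              _ = 2 := by rw [tsum_geometric_of_lt_one (by norm_num) (by norm_num)]; norm_num
        _ = (1/2:ℝ)^L := by rw [pow_succ]; ring
    have hKlt : (K:ℝ) < 2^(L+1) := by
      exact_mod_cast Nat.lt_pow_succ_log_self one_lt_two K
    calc ∑ k ∈ T2, min 4 ((K:ℝ) * (1/2)^k) ≤ ∑ k ∈ T2, (K:ℝ) * (1/2)^k :=
          Finset.sum_le_sum (fun k _ => min_le_right _ _)
      _ = (K:ℝ) * ∑ k ∈ T2, (1/2:ℝ)^k := by rw [Finset.mul_sum]
      _ ≤ (K:ℝ) * (1/2)^L := mul_le_mul_of_nonneg_left hgeo (Nat.cast_nonneg K)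
      _ ≤ 2 := by
          have hp : (0:ℝ) < 2^L := by positivity
          rw [one_div, inv_pow, ← div_eq_mul_inv, div_le_iff₀ hp]
          rw [pow_succ] at hKlt
          linarith
  -- final assembly
  have hlogK : (0:ℝ) ≤ Real.log K := Real.log_nonneg (by exact_mod_cast hK)
  have hL2 : (L:ℝ) ≤ 2 * Real.log K := by
    have h2L : ((2:ℝ))^L ≤ (K:ℝ) := by
      exact_mod_cast Nat.pow_log_le_self 2 (Nat.one_le_iff_ne_zero.mp hK)
    have hlog : (L:ℝ) * Real.log 2 ≤ Real.log K := by
      rw [← Real.log_pow]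
      exact Real.log_le_log (by positivity) h2L
    nlinarith [Real.log_two_gt_d9]
  calc ∑ j ∈ Finset.range K, f j ≤ (∑ k ∈ T1, min 4 ((K:ℝ) * (1/2)^k))
        + ∑ k ∈ T2, min 4 ((K:ℝ) * (1/2)^k) := by rw [← hsplit]; exact hsum1
    _ ≤ 4 * ((L:ℝ) + 1) + 2 := add_le_add hB1 hB2
    _ ≤ 8 * (1 + Real.log K) := by linarith


theorem sinc_telescoping_sum_bound :
    ∃ C : ℝ, 0 < C ∧ ∀ (x : ℝ), x ∈ Set.Icc 0 π → ∀ (K : ℕ), 1 ≤ K →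
      ∀ n : ℕ → ℕ, StrictMono n → (∀ j, 0 < n j) →
      ∑ j ∈ Finset.range K,
          |∫ t in ((n j : ℝ) * x)..((n (j + 1) : ℝ) * x), Real.sin t / t| ≤
        C * (1 + Real.log K) := by
  refine ⟨24, by norm_num, ?_⟩
  intro x hx K hK n hn hnpos
  have hlogK : (0:ℝ) ≤ Real.log K := Real.log_nonneg (by exact_mod_cast hK)
  rcases eq_or_lt_of_le hx.1 with hx0 | hx0
  · -- x = 0
    have : ∀ j ∈ Finset.range K,
        |∫ t in ((n j : ℝ) * x)..((n (j + 1) : ℝ) * x), Real.sin t / t| = 0 := by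
      intro j _
      rw [← hx0]
      simp
    rw [Finset.sum_congr rfl this, Finset.sum_const, smul_zero]
    positivity
  · -- x > 0
    set a : ℕ → ℝ := fun j => (n j : ℝ) * x with ha
    have ha0 : ∀ j, 0 ≤ a j := fun j => mul_nonneg (Nat.cast_nonneg _) hx0.le
    have hamono : Monotone a := by
      intro i j hij
      exact mul_le_mul_of_nonneg_right (Nat.cast_le.mpr (hn.monotone hij)) hx0.le
    have hapos : ∀ j, 0 < a j := fun j =>
      mul_pos (by exact_mod_cast hnpos j) hx0
    have hterm : ∀ j ∈ Finset.range K,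
        |∫ t in ((n j : ℝ) * x)..((n (j + 1) : ℝ) * x), Real.sin t / t|
          ≤ 3 * (min (a (j+1) - a j) 1 / max (a j) 1) := by
      intro j _
      have := lemP (hapos j) (hamono (Nat.le_succ j))
      rw [mul_div_assoc] at this
      exact this
    calc ∑ j ∈ Finset.range K,
          |∫ t in ((n j : ℝ) * x)..((n (j + 1) : ℝ) * x), Real.sin t / t|
        ≤ ∑ j ∈ Finset.range K, 3 * (min (a (j+1) - a j) 1 / max (a j) 1) :=
          Finset.sum_le_sum hterm
      _ = 3 * ∑ j ∈ Finset.range K, min (a (j+1) - a j) 1 / max (a j) 1 := by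
          rw [Finset.mul_sum]
      _ ≤ 3 * (8 * (1 + Real.log K)) := by
          apply mul_le_mul_of_nonneg_left (lemO a ha0 hamono K hK) (by norm_num)
      _ = 24 * (1 + Real.log K) := by ring
end

section
/- Let $c_1, \dots, c_{\tilde{K}}$ be real numbers with $|c_j| \leq 4M$ for all $j$, and suppose each nonzero $c_j$ satisfies $|c_j| \geq P^{-2}$. Let $\tilde{J}_1, \dots, \tilde{J}_{\tilde{K}}$ be disjoint intervals of positive integers, and set $h(t) = \sum_{j=1}^{\tilde{K}} c_j \sum_{n \in \tilde{J}_j} \cos(2\pi n t)$. Assuming the Littlewood $L^1$ lower bound $\|\sum a_j e(n_j t)\|_1 \geq c \sum_j |a_j|/j$, one has $\|h\|_{L^1[0,1]} \geq c' P^{-2} \log\frac{|h(0)|}{4M}$ for an absolute constant $c' > 0$, whenever $|h(0)| > 4M$. -/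
open Real

private lemma pair_exp_cos (r t : ℝ) (m : ℕ) :
    ((r/2 : ℝ) : ℂ) * Complex.exp (2 * (Real.pi:ℂ) * Complex.I * (((m:ℤ)):ℂ) * (t:ℂ)) +
      ((r/2 : ℝ) : ℂ) * Complex.exp (2 * (Real.pi:ℂ) * Complex.I * (((-(m:ℤ)):ℤ):ℂ) * (t:ℂ)) =
      (r : ℂ) * ((Real.cos (2 * Real.pi * m * t) : ℝ) : ℂ) := by
  have h1 : (2 * (Real.pi:ℂ) * Complex.I * (((m:ℤ)):ℂ) * (t:ℂ)) =
      ((2 * Real.pi * m * t : ℝ) : ℂ) * Complex.I := by push_cast; ring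
  have h2 : (2 * (Real.pi:ℂ) * Complex.I * (((-(m:ℤ)):ℤ):ℂ) * (t:ℂ)) =
      (-((2 * Real.pi * m * t : ℝ) : ℂ)) * Complex.I := by push_cast; ring
  rw [h1, h2, Complex.ofReal_cos, Complex.exp_mul_I, Complex.exp_mul_I, Complex.cos_neg,
    Complex.sin_neg]
  push_cast
  ring

theorem L1_lower_bound_structured
    (c : ℝ) (hc : 0 < c)
    -- the Littlewood L¹ theorem, assumed as a hypothesis
    (hLitt : ∀ (k : ℕ) (a : Fin k → ℂ) (n : Fin k → ℤ), StrictMono n →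
      c * ∑ j : Fin k, ‖a j‖ / ((j : ℕ) + 1) ≤
        ∫ t in (0:ℝ)..1, ‖∑ j : Fin k, a j * Complex.exp (2 * Real.pi * Complex.I * (n j) * t)‖) :
    ∃ c' : ℝ, 0 < c' ∧
      ∀ (M P : ℝ), 0 < M → 0 < P →
      ∀ (K : ℕ) (cc : Fin K → ℝ) (u v : Fin K → ℕ),
        (∀ j, 0 < u j) → (∀ j, u j ≤ v j) →
        (∀ i j, i ≠ j → Disjoint (Finset.Icc (u i) (v i)) (Finset.Icc (u j) (v j))) →
        (∀ j, |cc j| ≤ 4 * M) →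
        (∀ j, cc j ≠ 0 → 1 / P ^ 2 ≤ |cc j|) →
        4 * M < |∑ j : Fin K, cc j * ((Finset.Icc (u j) (v j)).card : ℝ)| →
        c' / P ^ 2 *
            Real.log (|∑ j : Fin K, cc j * ((Finset.Icc (u j) (v j)).card : ℝ)| / (4 * M)) ≤
          ∫ t in (0:ℝ)..1,
            |∑ j : Fin K, cc j * ∑ n ∈ Finset.Icc (u j) (v j), Real.cos (2 * Real.pi * n * t)| := by
  refine ⟨c / 2, by positivity, ?_⟩
  intro M P hM hP K cc u v hu huv hdisj hbd hlow hbig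
  set J : Fin K → Finset ℕ := fun j => Finset.Icc (u j) (v j) with hJ
  set E : Fin K → Finset ℤ := fun j =>
    ((J j).image (fun m : ℕ => (m : ℤ))) ∪ ((J j).image (fun m : ℕ => -(m : ℤ))) with hE
  set F : Fin K → Finset ℤ := fun j => if cc j = 0 then ∅ else E j with hF
  set s : Finset ℤ := Finset.univ.biUnion F with hs
  set A : ℤ → ℂ := fun n =>
    (((∑ i : Fin K, if n.natAbs ∈ J i then cc i else 0) / 2 : ℝ) : ℂ) with hA
  -- natAbs of members of E j
  have hEabs : ∀ j n, n ∈ E j → n.natAbs ∈ J j := by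
    intro j n hn
    rcases Finset.mem_union.mp hn with hn | hn <;>
      · obtain ⟨m, hm, rfl⟩ := Finset.mem_image.mp hn
        simpa using hm
  -- the coefficient sum picks out the unique j
  have hAval : ∀ j, ∀ m ∈ J j, (∑ i : Fin K, if m ∈ J i then cc i else 0) = cc j := by
    intro j m hm
    rw [Finset.sum_eq_single j]
    · simp [hm]
    · intro i _ hij
      have : m ∉ J i := fun hmi => Finset.disjoint_left.mp (hdisj i j hij) hmi hm
      simp [this]
    · simp
  -- pairwise disjointness of the F's
  have hFsub : ∀ j, F j ⊆ E j := by
    intro j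
    simp only [hF]
    split_ifs
    · exact Finset.empty_subset _
    · exact Finset.Subset.refl _
  have hFdisj : ∀ i j : Fin K, i ≠ j → Disjoint (F i) (F j) := by
    intro i j hij
    rw [Finset.disjoint_left]
    intro n hni hnj
    exact Finset.disjoint_left.mp (hdisj i j hij) (hEabs i n (hFsub i hni))
      (hEabs j n (hFsub j hnj))
  have hFdisj' : (↑(Finset.univ : Finset (Fin K)) : Set (Fin K)).PairwiseDisjoint F :=
    fun i _ j _ hij => hFdisj i j hij
  -- pointwise identity
  have hpt : ∀ t : ℝ,
      ∑ n ∈ s, A n * Complex.exp (2 * (Real.pi:ℂ) * Complex.I * (n : ℂ) * (t : ℂ)) =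
        ((∑ j : Fin K, cc j * ∑ m ∈ J j, Real.cos (2 * Real.pi * m * t) : ℝ) : ℂ) := by
    intro t
    rw [hs, Finset.sum_biUnion hFdisj']
    push_cast
    refine Finset.sum_congr rfl ?_
    intro j _
    by_cases hcj : cc j = 0
    · simp [hF, hcj]
    · simp only [hF, if_neg hcj, hE]
      have hdisj_pn : Disjoint ((J j).image (fun m : ℕ => (m : ℤ)))
          ((J j).image (fun m : ℕ => -(m : ℤ))) := by
        rw [Finset.disjoint_left]
        rintro n hn1 hn2
        obtain ⟨m1, hm1, rfl⟩ := Finset.mem_image.mp hn1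
        obtain ⟨m2, hm2, hne⟩ := Finset.mem_image.mp hn2
        have h1 : 1 ≤ m1 := le_trans (hu j) (Finset.mem_Icc.mp hm1).1
        have h2 : 1 ≤ m2 := le_trans (hu j) (Finset.mem_Icc.mp hm2).1
        omega
      rw [Finset.sum_union hdisj_pn, Finset.sum_image (fun a _ b _ h => by exact_mod_cast h),
        Finset.sum_image (fun a _ b _ h => by omega), ← Finset.sum_add_distrib,
        Finset.mul_sum]
      refine Finset.sum_congr rfl ?_
      intro m hm
      have habs1 : ((m : ℤ)).natAbs = m := by simp
      have habs2 : (-(m : ℤ)).natAbs = m := by simp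
      have hAm : A (m : ℤ) = ((cc j / 2 : ℝ) : ℂ) := by
        rw [hA]; simp only [habs1, hAval j m hm]
      have hAm' : A (-(m : ℤ)) = ((cc j / 2 : ℝ) : ℂ) := by
        rw [hA]; simp only [habs2, hAval j m hm]
      rw [hAm, hAm']
      have := pair_exp_cos (cc j) t m
      push_cast at this ⊢
      convert this using 3 <;> push_cast <;> ring
  -- coefficient lower bound on s
  have hcoef : ∀ n ∈ s, 1 / (2 * P ^ 2) ≤ ‖A n‖ := by
    intro n hn
    obtain ⟨j, _, hnF⟩ := Finset.mem_biUnion.mp hn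
    simp only [hF] at hnF
    by_cases hcj : cc j = 0
    · simp [hcj] at hnF
    · rw [if_neg hcj] at hnF
      have hm := hEabs j n hnF
      have : A n = ((cc j / 2 : ℝ) : ℂ) := by rw [hA]; simp only [hAval j _ hm]
      rw [this, Complex.norm_real, Real.norm_eq_abs, abs_div]
      have := hlow j hcj
      rw [abs_of_nonneg (by norm_num : (0:ℝ) ≤ 2)]
      calc 1 / (2 * P ^ 2) = (1 / P ^ 2) / 2 := by ring
        _ ≤ |cc j| / 2 := by gcongr
  -- cardinality lower bound
  set N : ℕ := ∑ j ∈ Finset.univ.filter (fun j => cc j ≠ 0), (J j).card with hN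
  have hcard : N ≤ s.card := by
    rw [hs, Finset.card_biUnion (fun i _ j _ hij => hFdisj i j hij)]
    calc N = ∑ j ∈ Finset.univ.filter (fun j => cc j ≠ 0), (J j).card := hN
      _ ≤ ∑ j ∈ Finset.univ.filter (fun j => cc j ≠ 0), (F j).card := by
          refine Finset.sum_le_sum ?_
          intro j hj
          have hcj : cc j ≠ 0 := (Finset.mem_filter.mp hj).2
          simp only [hF, if_neg hcj, hE]
          calc (J j).card = ((J j).image (fun m : ℕ => (m : ℤ))).card :=
                (Finset.card_image_of_injective _ (fun a b h => by exact_mod_cast h)).symm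
            _ ≤ _ := Finset.card_le_card Finset.subset_union_left
      _ ≤ ∑ j : Fin K, (F j).card :=
          Finset.sum_le_sum_of_subset (Finset.filter_subset _ _)
  -- |h0| ≤ 4M * N
  set h0 : ℝ := ∑ j : Fin K, cc j * ((J j).card : ℝ) with hh0
  have hh0le : |h0| ≤ 4 * M * N := by
    have : h0 = ∑ j ∈ Finset.univ.filter (fun j => cc j ≠ 0), cc j * ((J j).card : ℝ) := by
      rw [hh0, Finset.sum_filter_of_ne]
      intro j _ hne hc0
      simp [hc0] at hne
    rw [this]
    calc |∑ j ∈ Finset.univ.filter (fun j => cc j ≠ 0), cc j * ((J j).card : ℝ)|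
        ≤ ∑ j ∈ Finset.univ.filter (fun j => cc j ≠ 0), |cc j * ((J j).card : ℝ)| :=
          Finset.abs_sum_le_sum_abs _ _
      _ ≤ ∑ j ∈ Finset.univ.filter (fun j => cc j ≠ 0), 4 * M * ((J j).card : ℝ) := by
          refine Finset.sum_le_sum ?_
          intro j _
          rw [abs_mul, Nat.abs_cast]
          exact mul_le_mul_of_nonneg_right (hbd j) (Nat.cast_nonneg _)
      _ = 4 * M * N := by rw [hN, ← Finset.mul_sum]; push_cast; ring
  -- Littlewood application
  set k : ℕ := s.card with hk
  set e := s.orderIsoOfFin rfl with he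
  have hmono : StrictMono (fun i : Fin k => ((e i : ℤ))) :=
    fun i j hij => Subtype.coe_lt_coe.mpr (e.strictMono hij)
  have hsum_transfer : ∀ f : ℤ → ℂ, ∑ i : Fin k, f ((e i : ℤ)) = ∑ n ∈ s, f n := by
    intro f
    rw [← Finset.sum_coe_sort s f]
    exact Equiv.sum_comp e.toEquiv (fun x => f (x : ℤ))
  have hLit := hLitt k (fun i => A ((e i : ℤ))) (fun i => (e i : ℤ)) hmono
  -- rewrite the integral
  have hint : (∫ t in (0:ℝ)..1, ‖∑ i : Fin k,
        A ((e i : ℤ)) * Complex.exp (2 * (Real.pi:ℂ) * Complex.I * ((e i : ℤ) : ℂ) * (t:ℂ))‖) =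
      ∫ t in (0:ℝ)..1,
        |∑ j : Fin K, cc j * ∑ m ∈ J j, Real.cos (2 * Real.pi * m * t)| := by
    refine intervalIntegral.integral_congr ?_
    intro t _
    simp only
    rw [hsum_transfer (fun n => A n * Complex.exp (2 * (Real.pi:ℂ) * Complex.I * (n:ℂ) * (t:ℂ))),
      hpt t, Complex.norm_real, Real.norm_eq_abs]
  rw [hint] at hLit
  refine le_trans ?_ hLit
  -- now pure real estimates
  have hratio : (1:ℝ) < |h0| / (4 * M) := by
    rw [lt_div_iff₀ (by positivity)]
    simpa using hbig
  have hNpos : (0:ℝ) < N := by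
    by_contra hcon
    push_neg at hcon
    have : |h0| ≤ 0 := le_trans hh0le (by nlinarith)
    have : (4:ℝ) * M < 0 := lt_of_lt_of_le hbig this
    nlinarith
  have hlog1 : Real.log (|h0| / (4 * M)) ≤ Real.log (k + 1) := by
    apply Real.log_le_log (by positivity)
    calc |h0| / (4 * M) ≤ N := by
          rw [div_le_iff₀ (by positivity)]
          calc |h0| ≤ 4 * M * N := hh0le
            _ = N * (4 * M) := by ring
      _ ≤ k := by exact_mod_cast hcard
      _ ≤ k + 1 := by linarith
  have hlog2 : Real.log (k + 1) ≤ ∑ i : Fin k, (1:ℝ) / ((i:ℕ) + 1) := by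
    have hh := log_add_one_le_harmonic k
    have hharm : ((harmonic k : ℚ) : ℝ) = ∑ i : Fin k, (1:ℝ) / ((i:ℕ) + 1) := by
      rw [harmonic, Fin.sum_univ_eq_sum_range (fun i => (1:ℝ) / ((i:ℕ) + 1))]
      push_cast
      refine Finset.sum_congr rfl ?_
      intro i _
      rw [one_div]
    rw [hharm] at hh
    refine le_trans (le_of_eq ?_) hh
    push_cast
    ring_nf
  calc c / 2 / P ^ 2 * Real.log (|h0| / (4 * M))
      ≤ c / 2 / P ^ 2 * (∑ i : Fin k, (1:ℝ) / ((i:ℕ) + 1)) := by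
        have : (0:ℝ) ≤ c / 2 / P ^ 2 := by positivity
        exact mul_le_mul_of_nonneg_left (le_trans hlog1 hlog2) this
    _ = c * ∑ i : Fin k, (1 / (2 * P ^ 2)) / ((i:ℕ) + 1) := by
        rw [Finset.mul_sum, Finset.mul_sum]
        refine Finset.sum_congr rfl ?_
        intro i _
        field_simp
    _ ≤ c * ∑ i : Fin k, ‖A ((e i : ℤ))‖ / ((i:ℕ) + 1) := by
        refine mul_le_mul_of_nonneg_left ?_ (le_of_lt hc)
        refine Finset.sum_le_sum ?_
        intro i _
        have hmem : ((e i : ℤ)) ∈ s := (e i).2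
        have := hcoef _ hmem
        gcongr
end
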